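/- If A and B are square matrices with disjoint spectra, F11 = exp(A), F22 = exp(B), and X is the unique solution of the Sylvester equation A X − X B = F11 C − C F22, then exp([[A, C],[0, B]]) = [[F11, X],[0, F22]]. -/

import Mathlib

open Matrix NormedSpace Polynomial

attribute [local instance] Matrix.linftyOpNormedRing Matrix.linftyOpNormedAlgebra

section aux
variable {m n : ℕ} {A : Matrix (Fin m) (Fin m) ℂ} {B : Matrix (Fin n) (Fin n) ℂ}
  {Z : Matrix (Fin m) (Fin n) ℂ}

lemma aux_pow_comm (h : A * Z = Z * B) (k : ℕ) : A ^ k * Z = Z * B ^ k := by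
  induction k with
  | zero => simp
  | succ k ih => rw [pow_succ, pow_succ, Matrix.mul_assoc, h, ← Matrix.mul_assoc, ih, Matrix.mul_assoc]

lemma aux_aeval_comm (h : A * Z = Z * B) (p : ℂ[X]) :
    aeval A p * Z = Z * aeval B p := by
  induction p using Polynomial.induction_on' with
  | add p q hp hq => rw [map_add, map_add, Matrix.add_mul, Matrix.mul_add, hp, hq]
  | monomial k c =>
    rw [aeval_monomial, aeval_monomial, ← Algebra.smul_def, ← Algebra.smul_def,
      Matrix.smul_mul, Matrix.mul_smul, aux_pow_comm h k]

lemma sylvester_zero (hspec : Disjoint (spectrum ℂ A) (spectrum ℂ B))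
    (h : A * Z = Z * B) : Z = 0 := by
  rcases Nat.eq_zero_or_pos n with hn | hn
  · ext i j; exact absurd j.isLt (by omega)
  haveI : Nonempty (Fin n) := ⟨⟨0, hn⟩⟩
  have hint : IsIntegral ℂ B := IsIntegral.of_finite ℂ B
  set p := minpoly ℂ B with hp
  have h1 : aeval A p * Z = 0 := by
    rw [aux_aeval_comm h p, hp, minpoly.aeval, Matrix.mul_zero]
  have hdeg : 0 < p.degree := minpoly.degree_pos hint
  have hmap := spectrum.map_polynomial_aeval_of_degree_pos A p hdeg
  have h0n : (0 : ℂ) ∉ spectrum ℂ (aeval A p) := by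
    rw [hmap]
    rintro ⟨μ, hμ, hev⟩
    have hmem : μ ∈ spectrum ℂ B := by
      rw [← AlgEquiv.spectrum_eq (Matrix.toLinAlgEquiv (Pi.basisFun ℂ (Fin n))) B,
        ← Module.End.hasEigenvalue_iff_mem_spectrum]
      exact Module.End.hasEigenvalue_of_isRoot (by rwa [minpoly.algEquiv_eq])
    exact Set.disjoint_left.mp hspec hμ hmem
  have hunit : IsUnit (aeval A p) := by
    have := spectrum.notMem_iff.mp h0n
    simpa using this.neg
  obtain ⟨u, hu⟩ := hunit
  have h2 : (↑u⁻¹ : Matrix (Fin m) (Fin m) ℂ) * (aeval A p * Z) = 0 := by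
    rw [h1, Matrix.mul_zero]
  rwa [← Matrix.mul_assoc, ← hu, u.inv_mul, Matrix.one_mul] at h2

lemma exp_fromBlocks (A : Matrix (Fin m) (Fin m) ℂ) (B : Matrix (Fin n) (Fin n) ℂ)
    (C : Matrix (Fin m) (Fin n) ℂ) :
    ∃ Y, exp (fromBlocks A C 0 B) = fromBlocks (exp A) Y 0 (exp B) := by
  set M := fromBlocks A C 0 B with hM
  have hpow : ∀ k : ℕ, ∃ D, M ^ k = fromBlocks (A ^ k) D 0 (B ^ k) := by
    intro k
    induction k with
    | zero => exact ⟨0, by simp [Matrix.fromBlocks_one]⟩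
    | succ k ih =>
      obtain ⟨D, hD⟩ := ih
      refine ⟨A ^ k * C + D * B, ?_⟩
      rw [pow_succ, hD, hM, fromBlocks_multiply]
      simp [← pow_succ]
  choose D hD using hpow
  have hS : HasSum (fun k : ℕ => ((Nat.factorial k : ℂ))⁻¹ • M ^ k) (exp M) := exp_series_hasSum_exp' M
  have h11 : HasSum (fun k : ℕ => (((Nat.factorial k : ℂ))⁻¹ • M ^ k).toBlocks₁₁) ((exp M).toBlocks₁₁) :=
    hS.map (AddMonoidHom.mk' Matrix.toBlocks₁₁ (fun _ _ => rfl))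
      (Continuous.matrix_submatrix continuous_id _ _)
  have h12 : HasSum (fun k : ℕ => (((Nat.factorial k : ℂ))⁻¹ • M ^ k).toBlocks₂₁) ((exp M).toBlocks₂₁) :=
    hS.map (AddMonoidHom.mk' Matrix.toBlocks₂₁ (fun _ _ => rfl))
      (Continuous.matrix_submatrix continuous_id _ _)
  have h22 : HasSum (fun k : ℕ => (((Nat.factorial k : ℂ))⁻¹ • M ^ k).toBlocks₂₂) ((exp M).toBlocks₂₂) :=
    hS.map (AddMonoidHom.mk' Matrix.toBlocks₂₂ (fun _ _ => rfl))
      (Continuous.matrix_submatrix continuous_id _ _)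
  simp only [hD, Matrix.fromBlocks_smul, Matrix.toBlocks_fromBlocks₁₁,
    Matrix.toBlocks_fromBlocks₂₁, Matrix.toBlocks_fromBlocks₂₂, smul_zero] at h11 h12 h22
  have e11 : (exp M).toBlocks₁₁ = exp A := h11.unique (exp_series_hasSum_exp' A)
  have e22 : (exp M).toBlocks₂₂ = exp B := h22.unique (exp_series_hasSum_exp' B)
  have e21 : (exp M).toBlocks₂₁ = 0 := h12.unique hasSum_zero
  refine ⟨(exp M).toBlocks₁₂, ?_⟩
  conv_lhs => rw [← Matrix.fromBlocks_toBlocks (exp M), e11, e22, e21]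

end aux

/-- Parlett-type recurrence: if `A` and `B` have disjoint spectra and `X` solves the
Sylvester equation `A X - X B = exp A · C - C · exp B`, then
`exp [[A, C], [0, B]] = [[exp A, X], [0, exp B]]`. -/
theorem stmt_8 (m n : ℕ) (A : Matrix (Fin m) (Fin m) ℂ) (B : Matrix (Fin n) (Fin n) ℂ)
    (C X : Matrix (Fin m) (Fin n) ℂ)
    (hspec : Disjoint (spectrum ℂ A) (spectrum ℂ B))
    (hX : A * X - X * B = exp A * C - C * exp B) :
    exp (fromBlocks A C 0 B) = fromBlocks (exp A) X 0 (exp B) := by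
  obtain ⟨Y, hY⟩ := exp_fromBlocks A B C
  have hcomm := ((Commute.refl (fromBlocks A C 0 B)).exp_right).eq
  rw [hY] at hcomm
  have h12 := congrArg Matrix.toBlocks₁₂ hcomm
  simp only [fromBlocks_multiply, Matrix.toBlocks_fromBlocks₁₂, mul_zero, zero_mul,
    add_zero, zero_add] at h12
  have h' : A * Y - Y * B = exp A * C - C * exp B := sub_eq_sub_iff_add_eq_add.mpr h12
  have hZ : A * (Y - X) = (Y - X) * B := by
    have hax := h'.trans hX.symm
    rw [sub_eq_sub_iff_add_eq_add] at hax
    rw [Matrix.mul_sub, Matrix.sub_mul, sub_eq_sub_iff_add_eq_add, hax, add_comm]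
  have : Y = X := sub_eq_zero.mp (sylvester_zero hspec hZ)
  rw [hY, this]
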